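/- Let κ be a regular uncountable cardinal. Then p_cl(κ) = t_cl(κ) = b(κ). -/

import Mathlib

noncomputable section

open Cardinal Set

universe u

namespace PT

/-- `A ⊆* B` (mod `< κ`): all but fewer than `κ` many elements of `A` lie in `B`. -/
def AlmostSub (κ : Cardinal.{u}) (A B : Set κ.ord.ToType) : Prop :=
  #(↥(A \ B)) < κ

/-- `A` is a pseudo-intersection of the family `F`:
it has size `κ` and is almost contained in every member of `F`. -/
def IsPseudoInter (κ : Cardinal.{u}) (F : Set (Set κ.ord.ToType)) (A : Set κ.ord.ToType) : Prop :=
  #(↥A) = κ ∧ ∀ B ∈ F, AlmostSub κ A B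

/-- The strong intersection property: every subfamily of size `< κ`
has intersection of size `κ`. -/
def HasSIP (κ : Cardinal.{u}) (F : Set (Set κ.ord.ToType)) : Prop :=
  ∀ G ⊆ F, #(↥G) < κ → #(↥(⋂₀ G)) = κ

/-- `F` is a witness for the pseudo-intersection number: a family of `κ`-sized
subsets of `κ` with the SIP and no pseudo-intersection of size `κ`. -/
def PWitness (κ : Cardinal.{u}) (F : Set (Set κ.ord.ToType)) : Prop :=
  (∀ A ∈ F, #(↥A) = κ) ∧ HasSIP κ F ∧ ¬∃ A, IsPseudoInter κ F A

/-- The pseudo-intersection number `𝔭(κ)`. -/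
def pNumber (κ : Cardinal.{u}) : Cardinal.{u} :=
  sInf {c | ∃ F, PWitness κ F ∧ #(↥F) = c}

/-- A tower of length `δ`: a `⊆*`-decreasing sequence of `κ`-sized subsets of `κ`
with the SIP and no pseudo-intersection of size `κ`. -/
def TowerSeq (κ : Cardinal.{u}) (δ : Ordinal.{u}) (T : Ordinal.{u} → Set κ.ord.ToType) : Prop :=
  (∀ α < δ, #(↥(T α)) = κ) ∧
  (∀ α < δ, ∀ β < δ, α ≤ β → AlmostSub κ (T β) (T α)) ∧
  HasSIP κ (T '' Iio δ) ∧
  ¬∃ A, IsPseudoInter κ (T '' Iio δ) A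

/-- The tower number `𝔱(κ)`: the minimal size of a tower of subsets of `κ`. -/
def tNumber (κ : Cardinal.{u}) : Cardinal.{u} :=
  sInf {c | ∃ δ T, TowerSeq κ δ T ∧ #(↥(T '' Iio δ)) = c}

/-- `C` is a club (closed unbounded set) in `κ`. -/
def IsClubIn (κ : Cardinal.{u}) (C : Set κ.ord.ToType) : Prop :=
  (∀ a : κ.ord.ToType, ∃ b ∈ C, a < b) ∧
  ∀ a : κ.ord.ToType, (C ∩ Iio a).Nonempty → IsLUB (C ∩ Iio a) a → a ∈ C

/-- `S` is stationary in `κ`: it meets every club subset of `κ`. -/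
def IsStationaryIn (κ : Cardinal.{u}) (S : Set κ.ord.ToType) : Prop :=
  ∀ C, IsClubIn κ C → (S ∩ C).Nonempty

/-- A slalom on `κ`: a map from a domain `X ⊆ κ` into the nonempty
subsets of `κ` of size `< κ`. -/
structure Slalom (κ : Cardinal.{u}) where
  dom : Set κ.ord.ToType
  fn : κ.ord.ToType → Set κ.ord.ToType
  nonempty_fn : ∀ ξ ∈ dom, (fn ξ).Nonempty
  small_fn : ∀ ξ ∈ dom, #(↥(fn ξ)) < κ

/-- A slalom is club-supported if its domain is a club in `κ`. -/
def Slalom.ClubSupported {κ : Cardinal.{u}} (s : Slalom κ) : Prop :=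
  IsClubIn κ s.dom

/-- `u ⊆* v` for slaloms: `u ξ ⊆ v ξ` for all but fewer than `κ` many
`ξ ∈ dom u ∩ dom v`. -/
def Slalom.SubStar {κ : Cardinal.{u}} (s t : Slalom κ) : Prop :=
  #(↥{ξ : κ.ord.ToType | ξ ∈ s.dom ∩ t.dom ∧ ¬s.fn ξ ⊆ t.fn ξ}) < κ

/-- A club-supported `(μ, ν)`-gap of slaloms. -/
def ClubGap (κ μ ν : Cardinal.{u}) (u v : Ordinal.{u} → Slalom κ) : Prop :=
  (∀ γ < μ.ord, (u γ).ClubSupported) ∧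
  (∀ α < ν.ord, (v α).ClubSupported) ∧
  (∀ γ γ', γ < γ' → γ' < μ.ord → (u γ).SubStar (u γ')) ∧
  (∀ α α', α < α' → α' < ν.ord → (v α').SubStar (v α)) ∧
  (∀ γ < μ.ord, ∀ α < ν.ord, (u γ).SubStar (v α)) ∧
  ¬∃ w : Slalom κ, w.ClubSupported ∧ (∀ γ < μ.ord, (u γ).SubStar w) ∧
    ∀ α < ν.ord, w.SubStar (v α)

/-- `f ≤* g`: `f ξ ≤ g ξ` for all but fewer than `κ` many `ξ < κ`. -/
def LeStar (κ : Cardinal.{u}) (f g : κ.ord.ToType → κ.ord.ToType) : Prop :=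
  #(↥{ξ : κ.ord.ToType | ¬f ξ ≤ g ξ}) < κ

/-- The bounding number `𝔟(κ)`. -/
def bNumber (κ : Cardinal.{u}) : Cardinal.{u} :=
  sInf {c | ∃ B : Set (κ.ord.ToType → κ.ord.ToType),
    (¬∃ g, ∀ f ∈ B, LeStar κ f g) ∧ #(↥B) = c}

/-- `𝔭_cl(κ)`: minimal size of a family of clubs in `κ` with no
pseudo-intersection of size `κ`. -/
def pClNumber (κ : Cardinal.{u}) : Cardinal.{u} :=
  sInf {c | ∃ F : Set (Set κ.ord.ToType), (∀ C ∈ F, IsClubIn κ C) ∧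
    (¬∃ A, IsPseudoInter κ F A) ∧ #(↥F) = c}

/-- `𝔱_cl(κ)`: minimal size of a `⊆*`-well-ordered family of clubs in `κ`
with no pseudo-intersection of size `κ`. -/
def tClNumber (κ : Cardinal.{u}) : Cardinal.{u} :=
  sInf {c | ∃ (δ : Ordinal.{u}) (T : Ordinal.{u} → Set κ.ord.ToType),
    (∀ α < δ, IsClubIn κ (T α)) ∧
    (∀ α < δ, ∀ β < δ, α ≤ β → AlmostSub κ (T β) (T α)) ∧
    (¬∃ A, IsPseudoInter κ (T '' Iio δ) A) ∧ #(↥(T '' Iio δ)) = c}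


/-- `F` is a `κ`-complete filter on `κ`: it contains `κ`, is closed upwards,
and is closed under intersections of fewer than `κ` of its members. -/
def IsKappaCompleteFilter (κ : Cardinal.{u}) (F : Set (Set κ.ord.ToType)) : Prop :=
  Set.univ ∈ F ∧ (∀ A ∈ F, ∀ B, A ⊆ B → B ∈ F) ∧
  ∀ G ⊆ F, #(↥G) < κ → ⋂₀ G ∈ F



/-- `𝔭_F(κ)`: minimal size of a subfamily of `F` with no pseudo-intersection. -/
def pFNumber (κ : Cardinal.{u}) (F : Set (Set κ.ord.ToType)) : Cardinal.{u} :=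
  sInf {c | ∃ B ⊆ F, (¬∃ A, IsPseudoInter κ B A) ∧ #(↥B) = c}

/-- The finite intersection property. -/
def HasFIP (κ : Cardinal.{u}) (F : Set (Set κ.ord.ToType)) : Prop :=
  ∀ G ⊆ F, G.Finite → #(↥(⋂₀ G)) = κ

/-- `𝔭*(κ)`. -/
def pStarNumber (κ : Cardinal.{u}) : Cardinal.{u} :=
  sInf {c | ∃ F : Set (Set κ.ord.ToType), (∀ A ∈ F, #(↥A) = κ) ∧ HasFIP κ F ∧
    (¬∃ A, IsPseudoInter κ F A) ∧ #(↥F) = c}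



/-- `𝔱*(κ)`. -/
def tStarNumber (κ : Cardinal.{u}) : Cardinal.{u} :=
  sInf {c | ∃ (δ : Ordinal.{u}) (T : Ordinal.{u} → Set κ.ord.ToType),
    (∀ α < δ, #(↥(T α)) = κ) ∧
    (∀ α < δ, ∀ β < δ, α ≤ β → AlmostSub κ (T β) (T α)) ∧
    (¬∃ A, IsPseudoInter κ (T '' Iio δ) A) ∧ #(↥(T '' Iio δ)) = c}

/-- `D` is dense in the poset `P`. -/
def DenseBelow {P : Type u} [Preorder P] (D : Set P) : Prop :=
  ∀ p : P, ∃ q ∈ D, q ≤ p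

/-- Two conditions are compatible: they have a common extension. -/
def Compat {P : Type u} [Preorder P] (p q : P) : Prop :=
  ∃ r, r ≤ p ∧ r ≤ q

/-- A filter on a poset: upward closed and downward directed. -/
def IsPosetFilter {P : Type u} [Preorder P] (G : Set P) : Prop :=
  (∀ p ∈ G, ∀ q, p ≤ q → q ∈ G) ∧
  ∀ p ∈ G, ∀ q ∈ G, ∃ r ∈ G, r ≤ p ∧ r ≤ q

/-- A set `C` of conditions is `κ`-directed: every subset of `C` of size `< κ`
has a lower bound (in `P`). -/
def KDirected (κ : Cardinal.{u}) {P : Type u} [Preorder P] (C : Set P) : Prop :=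
  ∀ D ⊆ C, #(↥D) < κ → ∃ q : P, ∀ p ∈ D, q ≤ p

/-- `P` is `κ`-centered with canonical lower bounds. -/
def KCenteredCanonical (κ : Cardinal.{u}) (P : Type u) [Preorder P] : Prop :=
  ∃ C : Ordinal.{u} → Set P,
    (∀ p : P, ∃ γ < κ.ord, p ∈ C γ) ∧
    (∀ γ < κ.ord, KDirected κ (C γ)) ∧
    ∃ f : Ordinal.{u} → (Ordinal.{u} → Ordinal.{u}) → Ordinal.{u},
      ∀ δ < κ.ord, ∀ (p : Ordinal.{u} → P) (g : Ordinal.{u} → Ordinal.{u}),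
        (∀ α < δ, g α < κ.ord ∧ p α ∈ C (g α)) →
        (∀ α < δ, ∀ β < δ, α ≤ β → p β ≤ p α) →
        f δ g < κ.ord ∧ ∃ q ∈ C (f δ g), ∀ α < δ, q ≤ p α

/-- Below every condition there is an antichain of size `κ`. -/
def KAntichainsBelow (κ : Cardinal.{u}) (P : Type u) [Preorder P] : Prop :=
  ∀ p : P, ∃ A : Set P, (∀ a ∈ A, a ≤ p) ∧
    (∀ a ∈ A, ∀ b ∈ A, a ≠ b → ¬Compat a b) ∧ #(↥A) = κ



/-- The ordinal corresponding to an element of `o.toType`. -/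
def ordOf {o : Ordinal.{u}} (i : o.ToType) : Ordinal.{u} :=
  ((Ordinal.ToType.mk (o := o)).symm i).1

/-- `P` is stationary `κ⁺`-Knaster. -/
def StationaryKnaster (κ : Cardinal.{u}) (P : Type u) [Preorder P] : Prop :=
  ∀ p : (Order.succ κ).ord.ToType → P,
    ∃ (E : Set (Order.succ κ).ord.ToType)
      (f : (Order.succ κ).ord.ToType → (Order.succ κ).ord.ToType),
      IsClubIn (Order.succ κ) E ∧
      (∀ i ∈ E, (ordOf i).cof = κ → f i < i) ∧
      ∀ i ∈ E, ∀ j ∈ E, (ordOf i).cof = κ → (ordOf j).cof = κ →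
        f i = f j → Compat (p i) (p j)

/-- `P` is `κ`-good-Knaster (property `(∗_κ)`). -/
def GoodKnaster (κ : Cardinal.{u}) (P : Type u) [Preorder P] : Prop :=
  StationaryKnaster κ P ∧
  (∀ p : ℕ → P, (∀ m n : ℕ, m ≤ n → p n ≤ p m) → ∃ q, IsGLB (Set.range p) q) ∧
  (∀ p q : P, Compat p q → ∃ r, IsGLB {p, q} r) ∧
  ∀ δ < κ.ord, ∀ p : Ordinal.{u} → P,
    (∀ α < δ, ∀ β < δ, α ≤ β → p β ≤ p α) → ∃ q, ∀ α < δ, q ≤ p α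

/-- `MA(κ-good-Knaster)`. -/
def MAGoodKnaster (κ : Cardinal.{u}) : Prop :=
  ∀ (P : Type u) [PartialOrder P], GoodKnaster κ P →
    ∀ D : Set (Set P), (∀ d ∈ D, DenseBelow d) → #(↥D) < 2 ^ κ →
      ∃ G : Set P, IsPosetFilter G ∧ ∀ d ∈ D, (G ∩ d).Nonempty

/-- A slalom based on a set `C`. -/
def BasedSlalom (κ : Cardinal.{u}) (C : Set κ.ord.ToType)
    (f : κ.ord.ToType → Set κ.ord.ToType) : Prop :=
  ∀ ξ ∈ C, (f ξ).Nonempty ∧ #(↥(f ξ)) < κ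

/-- `f ⊆* g` for `C`-based slaloms. -/
def BasedSubStar (κ : Cardinal.{u}) (C : Set κ.ord.ToType)
    (f g : κ.ord.ToType → Set κ.ord.ToType) : Prop :=
  #(↥{ξ : κ.ord.ToType | ξ ∈ C ∧ ¬f ξ ⊆ g ξ}) < κ

/-- A `(lam, mu)`-tight gap of slaloms based on the club `C`. -/
def TightGap (κ lam mu : Cardinal.{u}) (C : Set κ.ord.ToType)
    (U V : Ordinal.{u} → κ.ord.ToType → Set κ.ord.ToType) : Prop :=
  IsClubIn κ C ∧
  (∀ α < lam.ord, BasedSlalom κ C (U α)) ∧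
  (∀ β < mu.ord, BasedSlalom κ C (V β)) ∧
  (∀ α α', α < α' → α' < lam.ord → ∀ β β', β < β' → β' < mu.ord →
    #(↥{ξ : κ.ord.ToType | ξ ∈ C ∧
      ¬(U α ξ ⊂ U α' ξ ∧ U α' ξ ⊂ V β' ξ ∧ V β' ξ ⊂ V β ξ)}) < κ) ∧
  (∀ w, BasedSlalom κ C w → (∀ β < mu.ord, BasedSubStar κ C w (V β)) →
    ∃ α < lam.ord, BasedSubStar κ C w (U α)) ∧
  (∀ w, BasedSlalom κ C w → (∀ α < lam.ord, BasedSubStar κ C (U α) w) →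
    ∃ β < mu.ord, BasedSubStar κ C (V β) w)

/-- `s_X ξ`: the least element of `X` above `ξ` (junk value `ξ` if none exists). -/
def nextIn (κ : Cardinal.{u}) (X : Set κ.ord.ToType) (ξ : κ.ord.ToType) : κ.ord.ToType :=
  haveI := Classical.dec {η : κ.ord.ToType | η ∈ X ∧ ξ < η}.Nonempty
  if h : {η : κ.ord.ToType | η ∈ X ∧ ξ < η}.Nonempty then
    wellFounded_lt.min {η : κ.ord.ToType | η ∈ X ∧ ξ < η} h
  else ξ


variable {κ : Cardinal.{u}}

theorem ordOf_lt {o : Ordinal.{u}} (i : o.ToType) : ordOf i < o :=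
  (((Ordinal.ToType.mk (o := o))).symm i).2

theorem ordOf_lt_ordOf {o : Ordinal.{u}} {i j : o.ToType} : ordOf i < ordOf j ↔ i < j := by
  rw [show ordOf i < ordOf j ↔ (((Ordinal.ToType.mk (o := o))).symm i) < (((Ordinal.ToType.mk (o := o))).symm j) from Iff.rfl.trans Subtype.coe_lt_coe, OrderIso.lt_iff_lt]

theorem ordOf_le_ordOf {o : Ordinal.{u}} {i j : o.ToType} : ordOf i ≤ ordOf j ↔ i ≤ j := by
  rw [show ordOf i ≤ ordOf j ↔ (((Ordinal.ToType.mk (o := o))).symm i) ≤ (((Ordinal.ToType.mk (o := o))).symm j) from Iff.rfl.trans Subtype.coe_le_coe, OrderIso.le_iff_le]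

theorem exists_ordOf {o : Ordinal.{u}} {α : Ordinal.{u}} (h : α < o) :
    ∃ i : o.ToType, ordOf i = α :=
  ⟨(Ordinal.ToType.mk (o := o)) ⟨α, h⟩, by simp [ordOf]⟩

theorem mk_X : #(κ.ord.ToType) = κ := by simp

theorem bounded_small (b : κ.ord.ToType) {S : Set κ.ord.ToType}
    (h : ∀ x ∈ S, x < b) : #S < κ :=
  (Cardinal.mk_le_mk_of_subset (fun x hx => h x hx)).trans_lt (Cardinal.mk_Iio_ord_toType b)

theorem small_bounded (hreg : κ.IsRegular) {S : Set κ.ord.ToType} (h : #S < κ) :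
    ∃ b, ∀ x ∈ S, x < b := by
  have hlim := Cardinal.isSuccLimit_ord hreg.aleph0_le
  have hsup : (⨆ x : S, Order.succ (ordOf x.1)) < κ.ord := by
    apply Ordinal.iSup_lt_ord
    · rwa [hreg.cof_eq]
    · exact fun i => hlim.succ_lt (ordOf_lt i.1)
  obtain ⟨b, hb⟩ := exists_ordOf hsup
  refine ⟨b, fun x hx => ?_⟩
  rw [← ordOf_lt_ordOf, hb]
  exact lt_of_lt_of_le (Order.lt_succ _) (le_ciSup (Ordinal.bddAbove_range _) (⟨x, hx⟩ : S))

theorem exists_above (hreg : κ.IsRegular) (a : κ.ord.ToType) : ∃ b, a < b := by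
  haveI := Cardinal.noMaxOrder hreg.aleph0_le
  exact NoMaxOrder.exists_gt a

theorem exists_isLUB {S : Set κ.ord.ToType} (hne : S.Nonempty)
    (hb : ∃ b, ∀ x ∈ S, x ≤ b) : ∃ a, IsLUB S a := by
  obtain ⟨b, hb⟩ := hb
  have hub : (upperBounds S).Nonempty := ⟨b, fun x hx => hb x hx⟩
  refine ⟨wellFounded_lt.min _ hub, wellFounded_lt.min_mem _ hub, fun c hc => ?_⟩
  exact le_of_not_gt (fun hlt => wellFounded_lt.not_lt_min _ hc hlt)

-- ### nextIn
theorem nextIn_spec {A : Set κ.ord.ToType} (hA : ∀ a, ∃ b ∈ A, a < b) (ξ : κ.ord.ToType) :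
    nextIn κ A ξ ∈ A ∧ ξ < nextIn κ A ξ := by
  classical
  have hne : {η : κ.ord.ToType | η ∈ A ∧ ξ < η}.Nonempty := by
    obtain ⟨b, hb, hlt⟩ := hA ξ; exact ⟨b, hb, hlt⟩
  rw [nextIn, dif_pos hne]
  exact wellFounded_lt.min_mem _ hne

-- ### unbounded sets have size κ
theorem unbounded_mk (hreg : κ.IsRegular) {S : Set κ.ord.ToType}
    (hS : ∀ a, ∃ b ∈ S, a < b) : #S = κ := by
  refine le_antisymm ((Cardinal.mk_set_le S).trans_eq mk_X) (le_of_not_gt fun h => ?_)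
  obtain ⟨b, hb⟩ := small_bounded hreg h
  obtain ⟨c, hc, hlt⟩ := hS b
  exact absurd (hb c hc) (not_lt.2 hlt.le)

-- ### size-κ sets are unbounded
theorem mk_unbounded (hreg : κ.IsRegular) {S : Set κ.ord.ToType}
    (hS : #S = κ) : ∀ a, ∃ b ∈ S, a < b := by
  intro a
  by_contra h
  push_neg at h
  obtain ⟨b, hb⟩ := exists_above hreg a
  have : #S < κ := bounded_small b (fun x hx => lt_of_le_of_lt (h x hx) hb)
  exact absurd hS this.ne

-- ### closure points
def Cl (κ : Cardinal.{u}) (g : κ.ord.ToType → κ.ord.ToType) : Set κ.ord.ToType :=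
  {ξ | ∀ ρ < ξ, g ρ < ξ}

theorem image_small (hreg : κ.IsRegular) (hunc : ℵ₀ < κ)
    (g : κ.ord.ToType → κ.ord.ToType) (b : κ.ord.ToType) :
    ∃ c, ∀ ρ ≤ b, g ρ < c := by
  have h1 : #(g '' Iic b) < κ := by
    obtain ⟨b', hb'⟩ := exists_above hreg b
    have : #(Iic b : Set κ.ord.ToType) < κ :=
      bounded_small b' (fun x hx => lt_of_le_of_lt hx hb')
    exact (Cardinal.mk_image_le).trans_lt this
  obtain ⟨c, hc⟩ := small_bounded hreg h1
  exact ⟨c, fun ρ hρ => hc _ ⟨ρ, hρ, rfl⟩⟩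

theorem Cl_isClub (hreg : κ.IsRegular) (hunc : ℵ₀ < κ)
    (g : κ.ord.ToType → κ.ord.ToType) : IsClubIn κ (Cl κ g) := by
  constructor
  · -- unbounded
    intro a
    -- build an ω-chain
    have step : ∀ x : κ.ord.ToType, ∃ y, x < y ∧ ∀ ρ ≤ x, g ρ < y := by
      intro x
      obtain ⟨c, hc⟩ := image_small hreg hunc g x
      obtain ⟨y, hy⟩ := exists_above hreg (max x c)
      exact ⟨y, (le_max_left x c).trans_lt hy,
        fun ρ hρ => (hc ρ hρ).trans_le ((le_max_right x c).trans hy.le)⟩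
    choose nxt hnxt1 hnxt2 using step
    obtain ⟨a0, ha0⟩ := exists_above hreg a
    set u : ℕ → κ.ord.ToType := fun n => nxt^[n] a0 with hu
    have hmono : ∀ n, u n < u (n + 1) := by
      intro n
      simp only [hu, Function.iterate_succ', Function.comp_apply]
      exact hnxt1 _
    have hbd : ∃ b, ∀ x ∈ range u, x ≤ b := by
      have h0 : #(range u) ≤ ℵ₀ := (Set.countable_range u).le_aleph0
      have : #(range u) < κ := lt_of_le_of_lt h0 hunc
      obtain ⟨b, hb⟩ := small_bounded hreg this
      exact ⟨b, fun x hx => (hb x hx).le⟩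
    obtain ⟨s, hs⟩ := exists_isLUB (S := range u) ⟨u 0, ⟨0, rfl⟩⟩ hbd
    refine ⟨s, ?_, lt_of_lt_of_le ha0 (hs.1 ⟨0, rfl⟩)⟩
    intro ρ hρ
    -- ρ < s so ρ is not an upper bound of range u
    have : ¬(∀ x ∈ range u, x ≤ ρ) := by
      intro h
      exact absurd (hs.2 fun x hx => h x hx) (not_le.2 hρ)
    push_neg at this
    obtain ⟨x, ⟨n, rfl⟩, hx⟩ := this
    have h1 : g ρ < u (n + 1) := by
      simp only [hu, Function.iterate_succ', Function.comp_apply]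
      exact hnxt2 _ _ hx.le
    exact lt_of_lt_of_le h1 (lt_of_lt_of_le (hmono (n+1)) (hs.1 ⟨n+2, rfl⟩)).le
  · -- closed
    intro a hne hlub ρ hρ
    have : ¬(∀ x ∈ Cl κ g ∩ Iio a, x ≤ ρ) := fun h => absurd (hlub.2 fun x hx => h x hx) (not_le.2 hρ)
    push_neg at this
    obtain ⟨ξ, ⟨hξ1, hξ2⟩, hξ3⟩ := this
    exact lt_trans (hξ1 ρ hξ3) hξ2

-- ### LeStar basics
theorem leStar_refl (hreg : κ.IsRegular) (f : κ.ord.ToType → κ.ord.ToType) : LeStar κ f f := by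
  have : {ξ : κ.ord.ToType | ¬f ξ ≤ f ξ} = ∅ := by ext ξ; simp
  rw [LeStar, this]
  simpa using hreg.pos

theorem leStar_trans (hunc : ℵ₀ < κ) {f g h : κ.ord.ToType → κ.ord.ToType}
    (h1 : LeStar κ f g) (h2 : LeStar κ g h) : LeStar κ f h := by
  have hsub : {ξ : κ.ord.ToType | ¬f ξ ≤ h ξ} ⊆
      {ξ : κ.ord.ToType | ¬f ξ ≤ g ξ} ∪ {ξ : κ.ord.ToType | ¬g ξ ≤ h ξ} := by
    intro ξ hξ
    by_contra hc
    simp only [mem_union, mem_setOf_eq, not_or, not_not] at hc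
    exact hξ (hc.1.trans hc.2)
  calc #{ξ : κ.ord.ToType | ¬f ξ ≤ h ξ} ≤ _ := Cardinal.mk_le_mk_of_subset hsub
    _ ≤ #{ξ : κ.ord.ToType | ¬f ξ ≤ g ξ} + #{ξ : κ.ord.ToType | ¬g ξ ≤ h ξ} :=
      Cardinal.mk_union_le _ _
    _ < κ := Cardinal.add_lt_of_lt hunc.le h1 h2

-- ### Cl is almost-monotone
theorem cl_almostSub (hreg : κ.IsRegular) (hunc : ℵ₀ < κ)
    {f g : κ.ord.ToType → κ.ord.ToType} (h : LeStar κ f g) :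
    AlmostSub κ (Cl κ g) (Cl κ f) := by
  obtain ⟨η, hη⟩ := small_bounded hreg h
  obtain ⟨η', hη'⟩ := image_small hreg hunc f η
  obtain ⟨b, hb⟩ := exists_above hreg (max η η')
  apply bounded_small b
  rintro ξ ⟨hξg, hξf⟩
  by_contra hc
  push_neg at hc
  refine hξf (fun ρ hρ => ?_)
  rcases le_or_gt ρ η with hρη | hρη
  · exact lt_trans (hη' ρ hρη) (((le_max_right η η').trans_lt hb).trans_le hc)
  · have hρbad : ρ ∉ {ξ : κ.ord.ToType | ¬f ξ ≤ g ξ} := fun hmem =>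
      absurd (hη ρ hmem) (not_lt.2 hρη.le)
    simp only [mem_setOf_eq, not_not] at hρbad
    exact lt_of_le_of_lt hρbad (hξg ρ hρ)

-- ### the key closure-point lemma
theorem cl_almostSub_club (hreg : κ.IsRegular) (hunc : ℵ₀ < κ)
    {C : Set κ.ord.ToType} (hC : IsClubIn κ C)
    {g : κ.ord.ToType → κ.ord.ToType}
    (hdom : LeStar κ (fun ξ => nextIn κ C ξ) g) :
    AlmostSub κ (Cl κ g) C := by
  obtain ⟨η, hη⟩ := small_bounded hreg hdom
  obtain ⟨η', hη'⟩ := image_small hreg hunc (fun ξ => nextIn κ C ξ) η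
  obtain ⟨b, hb⟩ := exists_above hreg (max η η')
  apply bounded_small b
  rintro ξ ⟨hξg, hξC⟩
  by_contra hc
  push_neg at hc
  -- so b ≤ ξ, in particular η < ξ and η' < ξ
  have hηξ : η < ξ := ((le_max_left η η').trans_lt hb).trans_le hc
  have hη'ξ : η' < ξ := ((le_max_right η η').trans_lt hb).trans_le hc
  have key : ∀ c < ξ, ∃ y ∈ C ∩ Iio ξ, c < y := by
    intro c hcξ
    have hy := nextIn_spec hC.1 c
    refine ⟨nextIn κ C c, ⟨hy.1, ?_⟩, hy.2⟩
    rcases le_or_gt c η with hcη | hcη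
    · exact lt_trans (hη' c hcη) hη'ξ
    · have : c ∉ {ρ : κ.ord.ToType | ¬(fun ξ => nextIn κ C ξ) ρ ≤ g ρ} := fun hmem =>
        absurd (hη c hmem) (not_lt.2 hcη.le)
      simp only [mem_setOf_eq, not_not] at this
      exact lt_of_le_of_lt this (hξg c hcξ)
  obtain ⟨y0, hy0, _⟩ := key η hηξ
  refine hξC (hC.2 ξ ⟨y0, hy0⟩ ⟨fun x hx => hx.2.le, fun c hcub => ?_⟩)
  by_contra hcξ
  push_neg at hcξ
  obtain ⟨y, hy, hcy⟩ := key c hcξ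
  exact absurd (hcub hy) (not_le.2 hcy)

-- families of size ≤ κ are dominated
theorem dominated_of_le_kappa (hreg : κ.IsRegular)
    {B : Set (κ.ord.ToType → κ.ord.ToType)} (h : #B ≤ κ) :
    ∃ g, ∀ f ∈ B, LeStar κ f g := by
  obtain ⟨ι⟩ : Nonempty (B ↪ κ.ord.ToType) := by
    rw [← Cardinal.le_def]; rwa [mk_X]
  have hsmall : ∀ ξ : κ.ord.ToType, #((fun f : B => f.1 ξ) '' {f : B | ι f ≤ ξ}) < κ := by
    intro ξ
    refine Cardinal.mk_image_le.trans_lt ?_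
    have hinj : Function.Injective (fun f : {f : B | ι f ≤ ξ} => (⟨ι f.1, f.2⟩ : Iic ξ)) := by
      intro a b hab
      simp only [Subtype.mk.injEq] at hab
      exact Subtype.ext (ι.injective (Subtype.mk.inj hab))
    refine (Cardinal.mk_le_of_injective hinj).trans_lt ?_
    obtain ⟨c, hc⟩ := exists_above hreg ξ
    exact bounded_small c (fun x hx => lt_of_le_of_lt hx hc)
  choose g hg using fun ξ => small_bounded hreg (hsmall ξ)
  refine ⟨g, fun f hf => ?_⟩
  apply bounded_small (ι ⟨f, hf⟩)
  intro ξ hξ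
  by_contra hc
  push_neg at hc
  exact hξ (hg ξ _ ⟨⟨f, hf⟩, hc, rfl⟩).le

theorem bSet_nonempty (hreg : κ.IsRegular) :
    {c | ∃ B : Set (κ.ord.ToType → κ.ord.ToType),
      (¬∃ g, ∀ f ∈ B, LeStar κ f g) ∧ #(↥B) = c}.Nonempty := by
  refine ⟨_, (Set.univ : Set (κ.ord.ToType → κ.ord.ToType)), ?_, rfl⟩
  rintro ⟨g, hg⟩
  set f : κ.ord.ToType → κ.ord.ToType := fun ξ => nextIn κ (Set.univ : Set κ.ord.ToType) (g ξ) with hf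
  have huniv : ∀ a : κ.ord.ToType, ∃ b ∈ (Set.univ : Set κ.ord.ToType), a < b := by
    intro a; obtain ⟨b, hb⟩ := exists_above hreg a; exact ⟨b, mem_univ b, hb⟩
  have : {ξ : κ.ord.ToType | ¬f ξ ≤ g ξ} = (Set.univ : Set κ.ord.ToType) := by
    ext ξ
    simp only [mem_setOf_eq, mem_univ, iff_true, not_le, hf]
    exact (nextIn_spec huniv (g ξ)).2
  have hcard := hg f (mem_univ f)
  rw [LeStar, this] at hcard
  rw [show #(Set.univ : Set κ.ord.ToType) = κ by rw [Cardinal.mk_univ, mk_X]] at hcard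
  exact absurd hcard (lt_irrefl κ)

theorem kappa_lt_bNumber (hreg : κ.IsRegular) : κ < bNumber κ := by
  have hmem := csInf_mem (bSet_nonempty (κ := κ) hreg)
  obtain ⟨B, hB, hBcard⟩ := hmem
  rw [bNumber, ← hBcard]
  by_contra hc
  push_neg at hc
  exact hB (dominated_of_le_kappa hreg hc)

theorem dominated_of_lt_bNumber {B : Set (κ.ord.ToType → κ.ord.ToType)}
    (h : #B < bNumber κ) : ∃ g, ∀ f ∈ B, LeStar κ f g := by
  by_contra hc
  have : bNumber κ ≤ #B := csInf_le' (show #B ∈ {c | ∃ B : Set (κ.ord.ToType → κ.ord.ToType),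
    (¬∃ g, ∀ f ∈ B, LeStar κ f g) ∧ #(↥B) = c} from ⟨B, hc, rfl⟩)
  exact absurd this (not_le.2 h)

-- LEMMA A: any club family without a pseudo-intersection has size ≥ b(κ)
theorem exists_pseudoInter_of_clubs (hreg : κ.IsRegular) (hunc : ℵ₀ < κ)
    {F : Set (Set κ.ord.ToType)} (hclub : ∀ C ∈ F, IsClubIn κ C)
    (hsize : #F < bNumber κ) :
    ∃ A : Set κ.ord.ToType, #(↥A) = κ ∧ ∀ C ∈ F, AlmostSub κ A C := by
  set B : Set (κ.ord.ToType → κ.ord.ToType) :=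
    (fun C : Set κ.ord.ToType => fun ξ => nextIn κ C ξ) '' F with hB
  have hBsize : #B < bNumber κ := Cardinal.mk_image_le.trans_lt hsize
  obtain ⟨g, hg⟩ := dominated_of_lt_bNumber hBsize
  refine ⟨Cl κ g, unbounded_mk hreg (Cl_isClub hreg hunc g).1, fun C hC => ?_⟩
  exact cl_almostSub_club hreg hunc (hclub C hC) (hg _ ⟨C, hC, rfl⟩)

theorem bNumber_le_club_witness (hreg : κ.IsRegular) (hunc : ℵ₀ < κ)
    {F : Set (Set κ.ord.ToType)} (hclub : ∀ C ∈ F, IsClubIn κ C)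
    (hnopi : ¬∃ A, IsPseudoInter κ F A) : bNumber κ ≤ #F := by
  by_contra hc
  push_neg at hc
  obtain ⟨A, hA1, hA2⟩ := exists_pseudoInter_of_clubs hreg hunc hclub hc
  exact hnopi ⟨A, hA1, hA2⟩

-- ### almostSub reflexivity
theorem almostSub_refl (hreg : κ.IsRegular) (A : Set κ.ord.ToType) : AlmostSub κ A A := by
  rw [AlmostSub, diff_self]
  simpa using hreg.pos

-- ### recursion producing a ≤*-increasing dominating sequence
section Rec

variable (κ) in
def gSeq (fi : (bNumber κ).ord.ToType → (κ.ord.ToType → κ.ord.ToType))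
    (hdom : ∀ (i : (bNumber κ).ord.ToType)
      (prev : ∀ j, j < i → (κ.ord.ToType → κ.ord.ToType)),
      ∃ g, (∀ j (hj : j < i), LeStar κ (prev j hj) g) ∧ LeStar κ (fi i) g) :
    (bNumber κ).ord.ToType → (κ.ord.ToType → κ.ord.ToType) :=
  wellFounded_lt.fix (fun i rec => Classical.choose (hdom i rec))

theorem gSeq_eq (fi : (bNumber κ).ord.ToType → (κ.ord.ToType → κ.ord.ToType))
    (hdom : ∀ (i : (bNumber κ).ord.ToType)
      (prev : ∀ j, j < i → (κ.ord.ToType → κ.ord.ToType)),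
      ∃ g, (∀ j (hj : j < i), LeStar κ (prev j hj) g) ∧ LeStar κ (fi i) g)
    (i : (bNumber κ).ord.ToType) :
    gSeq κ fi hdom i = Classical.choose (hdom i (fun j _ => gSeq κ fi hdom j)) := by
  exact wellFounded_lt.fix_eq _ i

theorem gSeq_mono (fi : (bNumber κ).ord.ToType → (κ.ord.ToType → κ.ord.ToType))
    (hdom : ∀ (i : (bNumber κ).ord.ToType)
      (prev : ∀ j, j < i → (κ.ord.ToType → κ.ord.ToType)),
      ∃ g, (∀ j (hj : j < i), LeStar κ (prev j hj) g) ∧ LeStar κ (fi i) g)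
    {i j : (bNumber κ).ord.ToType} (hij : j < i) :
    LeStar κ (gSeq κ fi hdom j) (gSeq κ fi hdom i) := by
  rw [gSeq_eq fi hdom i]
  exact (Classical.choose_spec (hdom i (fun j _ => gSeq κ fi hdom j))).1 j hij

theorem gSeq_dom (fi : (bNumber κ).ord.ToType → (κ.ord.ToType → κ.ord.ToType))
    (hdom : ∀ (i : (bNumber κ).ord.ToType)
      (prev : ∀ j, j < i → (κ.ord.ToType → κ.ord.ToType)),
      ∃ g, (∀ j (hj : j < i), LeStar κ (prev j hj) g) ∧ LeStar κ (fi i) g)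
    (i : (bNumber κ).ord.ToType) :
    LeStar κ (fi i) (gSeq κ fi hdom i) := by
  rw [gSeq_eq fi hdom i]
  exact (Classical.choose_spec (hdom i (fun j _ => gSeq κ fi hdom j))).2

end Rec

-- LEMMA B: the tower construction
theorem tower_exists (hreg : κ.IsRegular) (hunc : ℵ₀ < κ) :
    ∃ (δ : Ordinal.{u}) (T : Ordinal.{u} → Set κ.ord.ToType),
      (∀ α < δ, IsClubIn κ (T α)) ∧
      (∀ α < δ, ∀ β < δ, α ≤ β → AlmostSub κ (T β) (T α)) ∧
      (¬∃ A, IsPseudoInter κ (T '' Iio δ) A) ∧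
      #(↥(T '' Iio δ)) ≤ bNumber κ := by
  have hb_inf : ℵ₀ ≤ bNumber κ := (hunc.trans (kappa_lt_bNumber hreg)).le
  obtain ⟨B₀, hB₀, hB₀card⟩ := csInf_mem (bSet_nonempty (κ := κ) hreg)
  have hY : #((bNumber κ).ord.ToType) = #B₀ := by
    rw [Cardinal.mk_toType, Cardinal.card_ord]
    exact hB₀card.symm
  obtain ⟨e⟩ := Cardinal.eq.1 hY.symm
  obtain ⟨fi, hfieq⟩ : ∃ fi : (bNumber κ).ord.ToType → (κ.ord.ToType → κ.ord.ToType),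
      ∀ i, fi i = (e.symm i).1 := ⟨_, fun _ => rfl⟩
  have hdom : ∀ (i : (bNumber κ).ord.ToType)
      (prev : ∀ j, j < i → (κ.ord.ToType → κ.ord.ToType)),
      ∃ g, (∀ j (hj : j < i), LeStar κ (prev j hj) g) ∧ LeStar κ (fi i) g := by
    intro i prev
    have hScard : #(insert (fi i) (range (fun j : Iio i => prev j.1 j.2)) :
        Set (κ.ord.ToType → κ.ord.ToType)) < bNumber κ := by
      refine lt_of_le_of_lt (Cardinal.mk_insert_le) ?_
      have h1 : #(range (fun j : Iio i => prev j.1 j.2)) < bNumber κ :=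
        Cardinal.mk_range_le.trans_lt (Cardinal.mk_Iio_ord_toType i)
      exact Cardinal.add_lt_of_lt hb_inf h1 (lt_of_lt_of_le Cardinal.one_lt_aleph0 hb_inf)
    obtain ⟨g, hg⟩ := dominated_of_lt_bNumber hScard
    exact ⟨g, fun j hj => hg _ (mem_insert_of_mem _ ⟨⟨j, hj⟩, rfl⟩),
      hg _ (mem_insert _ _)⟩
  refine ⟨(bNumber κ).ord, fun α =>
    if h : α < (bNumber κ).ord then
      Cl κ (gSeq κ fi hdom (Ordinal.ToType.mk ⟨α, h⟩))
    else Set.univ, ?_, ?_, ?_, ?_⟩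
  · intro α hα
    beta_reduce
    rw [dif_pos hα]
    exact Cl_isClub hreg hunc _
  · intro α hα β hβ hαβ
    rcases eq_or_lt_of_le hαβ with rfl | hlt
    · exact almostSub_refl hreg _
    · beta_reduce
      rw [dif_pos hα, dif_pos hβ]
      apply cl_almostSub hreg hunc
      apply gSeq_mono
      exact (OrderIso.lt_iff_lt _).2 (Subtype.mk_lt_mk.2 hlt)
  · rintro ⟨A, hAκ, hAsub⟩
    have hAunb : ∀ a, ∃ b ∈ A, a < b := mk_unbounded hreg hAκ
    have hkey : ∀ i : (bNumber κ).ord.ToType,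
        LeStar κ (gSeq κ fi hdom i) (fun ξ => nextIn κ A ξ) := by
      intro i
      have hsub : AlmostSub κ A (Cl κ (gSeq κ fi hdom i)) := by
        have h1 := hAsub _ ⟨ordOf i, ordOf_lt i, rfl⟩
        beta_reduce at h1
        rw [dif_pos (ordOf_lt i)] at h1
        have h2 : (⟨ordOf i, ordOf_lt i⟩ : Iio (bNumber κ).ord) =
            ((Ordinal.ToType.mk (o := (bNumber κ).ord))).symm i := rfl
        rwa [h2, OrderIso.apply_symm_apply] at h1
      obtain ⟨η, hη⟩ := small_bounded hreg hsub
      apply bounded_small η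
      intro ξ hξ
      by_contra hc
      push_neg at hc
      obtain ⟨haA, haξ⟩ := nextIn_spec hAunb ξ
      have haCl : nextIn κ A ξ ∈ Cl κ (gSeq κ fi hdom i) := by
        by_contra hna
        exact absurd (hη _ ⟨haA, hna⟩) (not_lt.2 (hc.trans haξ.le))
      exact hξ (haCl ξ haξ).le
    apply hB₀
    refine ⟨fun ξ => nextIn κ A ξ, fun f hf => ?_⟩
    have h1 : LeStar κ f (gSeq κ fi hdom (e ⟨f, hf⟩)) := by
      have h2 := gSeq_dom fi hdom (e ⟨f, hf⟩)
      rwa [hfieq, e.symm_apply_apply] at h2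
    exact leStar_trans hunc h1 (hkey _)
  · have hsub : (fun α => if h : α < (bNumber κ).ord then
        Cl κ (gSeq κ fi hdom (Ordinal.ToType.mk ⟨α, h⟩))
      else Set.univ) '' Iio (bNumber κ).ord ⊆
        range (fun i : (bNumber κ).ord.ToType => Cl κ (gSeq κ fi hdom i)) := by
      rintro C ⟨α, hα, rfl⟩
      beta_reduce
      have hα' : α < (bNumber κ).ord := hα
      rw [dif_pos hα']
      exact ⟨Ordinal.ToType.mk ⟨α, hα'⟩, rfl⟩
    refine (Cardinal.mk_le_mk_of_subset hsub).trans ?_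
    refine (Cardinal.mk_range_le).trans ?_
    rw [Cardinal.mk_toType, Cardinal.card_ord]


/-- Let κ be a regular uncountable cardinal.
Then p_cl(κ) = t_cl(κ) = b(κ). -/
theorem pCl_eq_tCl_eq_bNumber (κ : Cardinal.{u}) (hreg : κ.IsRegular)
    (hunc : ℵ₀ < κ) :
    pClNumber κ = tClNumber κ ∧ tClNumber κ = bNumber κ := by
  obtain ⟨δ, T, h1, h2, h3, h4⟩ := tower_exists hreg hunc
  have hclubs : ∀ C ∈ T '' Iio δ, IsClubIn κ C := by
    rintro C ⟨α, hα, rfl⟩; exact h1 α hα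
  have hc_eq : #(↥(T '' Iio δ)) = bNumber κ :=
    le_antisymm h4 (bNumber_le_club_witness hreg hunc hclubs h3)
  have hpin : bNumber κ ∈ {c | ∃ F : Set (Set κ.ord.ToType), (∀ C ∈ F, IsClubIn κ C) ∧
      (¬∃ A, IsPseudoInter κ F A) ∧ #(↥F) = c} := ⟨T '' Iio δ, hclubs, h3, hc_eq⟩
  have htin : bNumber κ ∈ {c | ∃ (δ : Ordinal.{u}) (T : Ordinal.{u} → Set κ.ord.ToType),
      (∀ α < δ, IsClubIn κ (T α)) ∧
      (∀ α < δ, ∀ β < δ, α ≤ β → AlmostSub κ (T β) (T α)) ∧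
      (¬∃ A, IsPseudoInter κ (T '' Iio δ) A) ∧ #(↥(T '' Iio δ)) = c} :=
    ⟨δ, T, h1, h2, h3, hc_eq⟩
  have hp_le : pClNumber κ ≤ bNumber κ := csInf_le' hpin
  have ht_le : tClNumber κ ≤ bNumber κ := csInf_le' htin
  have hp_ge : bNumber κ ≤ pClNumber κ := by
    refine le_csInf ⟨_, hpin⟩ ?_
    rintro c ⟨F, hF1, hF2, rfl⟩
    exact bNumber_le_club_witness hreg hunc hF1 hF2
  have ht_ge : bNumber κ ≤ tClNumber κ := by
    refine le_csInf ⟨_, htin⟩ ?_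
    rintro c ⟨δ', T', hT1, hT2, hT3, rfl⟩
    refine bNumber_le_club_witness hreg hunc ?_ hT3
    rintro C ⟨α, hα, rfl⟩; exact hT1 α hα
  have hpb : pClNumber κ = bNumber κ := le_antisymm hp_le hp_ge
  have htb : tClNumber κ = bNumber κ := le_antisymm ht_le ht_ge
  exact ⟨hpb.trans htb.symm, htb⟩

end PT
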